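/- Let σ : [0,∞) → {1,2,3,4} be any measurable switching signal and let X : [0,∞) → ℝ² be continuous with X(t) = X(0) + ∫₀ᵗ G(σ(τ), X(τ)) dτ for all t ≥ 0. If X(0) ∈ [0,∞)², then X(t) ∈ [0,∞)² for all t ≥ 0; that is, the nonnegative orthant is positively invariant for the switched dynamics. -/

import Mathlib

open Real Set MeasureTheory Filter

/-- Inflow function `μ_k(s, x)` for modes `s ∈ {1,2,3,4}` (indexed `0..3`) and links
`k ∈ {1,2}` (indexed `0..1`). -/
noncomputable def mu (β η : ℝ) (s : Fin 4) (k : Fin 2) (x : ℝ × ℝ) : ℝ :=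
  match s.val, k.val with
  | 0, 0 => η * Real.exp (-β * x.1) / (Real.exp (-β * x.1) + Real.exp (-β * x.2))
  | 0, _ => η * Real.exp (-β * x.2) / (Real.exp (-β * x.1) + Real.exp (-β * x.2))
  | 1, 0 => η / (1 + Real.exp (-β * x.2))
  | 1, _ => η * Real.exp (-β * x.2) / (1 + Real.exp (-β * x.2))
  | 2, 0 => η * Real.exp (-β * x.1) / (Real.exp (-β * x.1) + 1)
  | 2, _ => η / (Real.exp (-β * x.1) + 1)
  | _, _ => η / 2

/-- Outflow (sending) function `f_k(y) = F_k (1 - e^{-y})` of link `k`. -/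
noncomputable def fOut (F : Fin 2 → ℝ) (k : Fin 2) (y : ℝ) : ℝ :=
  F k * (1 - Real.exp (-y))

/-- The mode-`s` vector field `G(s,x) = (μ₁(s,x) − f₁(x₁), μ₂(s,x) − f₂(x₂))`. -/
noncomputable def Gvec (β η : ℝ) (F : Fin 2 → ℝ) (s : Fin 4) (x : ℝ × ℝ) : ℝ × ℝ :=
  (mu β η s 0 x - fOut F 0 x.1, mu β η s 1 x - fOut F 1 x.2)

/-- The `k`-th coordinate of `x ∈ ℝ²`. -/
def coord (x : ℝ × ℝ) (k : Fin 2) : ℝ := if k = 0 then x.1 else x.2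

lemma mu_pos {β η : ℝ} (hη : 0 < η) (s : Fin 4) (k : Fin 2) (x : ℝ × ℝ) :
    0 < mu β η s k x := by
  fin_cases s <;> fin_cases k <;> simp only [mu] <;> positivity

lemma mu_le_eta {β η : ℝ} (hη : 0 < η) (s : Fin 4) (k : Fin 2) (x : ℝ × ℝ) :
    mu β η s k x ≤ η := by
  fin_cases s <;> fin_cases k <;> simp only [mu] <;>
    rw [div_le_iff₀ (by positivity)] <;>
    nlinarith [Real.exp_pos (-β * x.1), Real.exp_pos (-β * x.2), hη.le]

lemma mu_continuous (β η : ℝ) (s : Fin 4) (k : Fin 2) : Continuous (mu β η s k) := by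
  fin_cases s <;> fin_cases k <;> simp only [mu] <;>
    exact Continuous.div (by continuity) (by continuity) (fun x => by positivity)

lemma fOut_continuous (F : Fin 2 → ℝ) (k : Fin 2) : Continuous (fOut F k) := by
  unfold fOut; continuity

lemma fOut_nonpos {F : Fin 2 → ℝ} {k : Fin 2} {y : ℝ} (hFk : 0 ≤ F k) (hy : y ≤ 0) :
    fOut F k y ≤ 0 := by
  have h1 : (1:ℝ) ≤ Real.exp (-y) := by
    rw [show (1:ℝ) = Real.exp 0 by simp]
    exact Real.exp_le_exp.2 (by linarith)
  have : 1 - Real.exp (-y) ≤ 0 := by linarith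
  exact mul_nonpos_of_nonneg_of_nonpos hFk this

lemma Gvec_continuous (β η : ℝ) (F : Fin 2 → ℝ) (s : Fin 4) :
    Continuous (Gvec β η F s) := by
  unfold Gvec
  exact ((mu_continuous β η s 0).sub ((fOut_continuous F 0).comp continuous_fst)).prodMk
    ((mu_continuous β η s 1).sub ((fOut_continuous F 1).comp continuous_snd))

noncomputable def projL (k : Fin 2) : (ℝ × ℝ) →L[ℝ] ℝ :=
  if k = 0 then ContinuousLinearMap.fst ℝ ℝ ℝ else ContinuousLinearMap.snd ℝ ℝ ℝ

lemma projL_apply (k : Fin 2) (x : ℝ × ℝ) : projL k x = coord x k := by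
  fin_cases k <;> simp [projL, coord]

lemma projL_Gvec (β η : ℝ) (F : Fin 2 → ℝ) (s : Fin 4) (x : ℝ × ℝ) (k : Fin 2) :
    projL k (Gvec β η F s x) = mu β η s k x - fOut F k (coord x k) := by
  fin_cases k <;> simp [projL, Gvec, coord]

lemma comp_abs_bound {β η R y : ℝ} {F : Fin 2 → ℝ} (hη : 0 < η) {k : Fin 2}
    (hFk : 0 < F k) (s : Fin 4) (x : ℝ × ℝ) (hy : |y| ≤ R) :
    |mu β η s k x - fOut F k y| ≤ η + F k * (1 + Real.exp R) := by
  have hmu := mu_pos (β := β) hη s k x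
  have hmu' := mu_le_eta (β := β) hη s k x
  have h1 : |mu β η s k x| ≤ η := abs_le.2 ⟨by linarith, hmu'⟩
  have h3 : Real.exp (-y) ≤ Real.exp R := by
    rcases abs_le.1 hy with ⟨ha, hb⟩
    exact Real.exp_le_exp.2 (by linarith)
  have hep := Real.exp_pos (-y)
  have h2 : |fOut F k y| ≤ F k * (1 + Real.exp R) := by
    rw [fOut, abs_mul, abs_of_pos hFk]
    exact mul_le_mul_of_nonneg_left
      (abs_le.2 ⟨by nlinarith, by nlinarith [Real.exp_pos R]⟩) hFk.le
  calc |mu β η s k x - fOut F k y| ≤ |mu β η s k x| + |fOut F k y| := abs_sub _ _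
    _ ≤ η + F k * (1 + Real.exp R) := add_le_add h1 h2

/-- the nonnegative orthant `[0,∞)²` is positively invariant for the switched
dynamics `Ẋ = G(σ(t), X(t))` (in integral form). -/
theorem stmt5 (β η : ℝ) (F : Fin 2 → ℝ) (hβ : 0 < β) (hη : 0 < η)
    (hF : ∀ k, 0 < F k)
    (σ : ℝ → Fin 4) (hσ : Measurable σ)
    (X : ℝ → ℝ × ℝ) (hXcont : ContinuousOn X (Set.Ici (0 : ℝ)))
    (hXeq : ∀ t : ℝ, 0 ≤ t → X t = X 0 + ∫ τ in (0 : ℝ)..t, Gvec β η F (σ τ) (X τ))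
    (hX0 : X 0 ∈ Set.Ici (0 : ℝ) ×ˢ Set.Ici (0 : ℝ)) :
    ∀ t : ℝ, 0 ≤ t → X t ∈ Set.Ici (0 : ℝ) ×ˢ Set.Ici (0 : ℝ) := by
  intro t1 ht1
  suffices h : ∀ k : Fin 2, 0 ≤ coord (X t1) k by
    exact ⟨by simpa [coord] using h 0, by simpa [coord] using h 1⟩
  -- bound on trajectory
  have hXc : ContinuousOn X (Icc 0 t1) := hXcont.mono Icc_subset_Ici_self
  have hK : IsCompact (X '' Icc 0 t1) := isCompact_Icc.image_of_continuousOn hXc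
  obtain ⟨R, hR⟩ := hK.isBounded.exists_norm_le
  set f : ℝ → ℝ × ℝ := fun τ => Gvec β η F (σ τ) (X τ) with hfdef
  set M : ℝ := η + (max (F 0) (F 1)) * (1 + Real.exp R) with hMdef
  have hbound : ∀ τ ∈ Icc (0:ℝ) t1, ‖f τ‖ ≤ M := by
    intro τ hτ
    have hy : ‖X τ‖ ≤ R := hR _ (mem_image_of_mem X hτ)
    have hexpR : (0:ℝ) ≤ 1 + Real.exp R := by positivity
    rw [hfdef]
    simp only
    rw [Prod.norm_def]
    apply max_le
    · have h1 : |(X τ).1| ≤ R := by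
        rw [← Real.norm_eq_abs]; exact (norm_fst_le (X τ)).trans hy
      have := comp_abs_bound (β := β) hη (hF 0) (σ τ) (X τ) h1
      have hle : F 0 ≤ max (F 0) (F 1) := le_max_left _ _
      calc ‖(Gvec β η F (σ τ) (X τ)).1‖ = |mu β η (σ τ) 0 (X τ) - fOut F 0 (X τ).1| := by
            rw [Real.norm_eq_abs]; rfl
        _ ≤ η + F 0 * (1 + Real.exp R) := this
        _ ≤ M := by rw [hMdef]; nlinarith
    · have h1 : |(X τ).2| ≤ R := by
        rw [← Real.norm_eq_abs]; exact (norm_snd_le (X τ)).trans hy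
      have := comp_abs_bound (β := β) hη (hF 1) (σ τ) (X τ) h1
      have hle : F 1 ≤ max (F 0) (F 1) := le_max_right _ _
      calc ‖(Gvec β η F (σ τ) (X τ)).2‖ = |mu β η (σ τ) 1 (X τ) - fOut F 1 (X τ).2| := by
            rw [Real.norm_eq_abs]; rfl
        _ ≤ η + F 1 * (1 + Real.exp R) := this
        _ ≤ M := by rw [hMdef]; nlinarith
  -- measurability
  have hmeasX : AEStronglyMeasurable X (volume.restrict (Ioc 0 t1)) :=
    (hXcont.mono (fun τ hτ => le_of_lt hτ.1)).aestronglyMeasurable measurableSet_Ioc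
  have hfm : AEStronglyMeasurable f (volume.restrict (Ioc 0 t1)) := by
    have hfeq : f = fun τ => ∑ s : Fin 4,
        (σ ⁻¹' {s}).indicator (fun τ' => Gvec β η F s (X τ')) τ := by
      funext τ
      rw [hfdef]
      simp only
      rw [Finset.sum_eq_single (σ τ)]
      · rw [Set.indicator_of_mem (by simp)]
      · intro s _ hs
        exact Set.indicator_of_notMem (by simp [Ne.symm hs]) _
      · simp
    rw [hfeq]
    exact Finset.aestronglyMeasurable_fun_sum _ fun s _ =>
      (((Gvec_continuous β η F s).comp_aestronglyMeasurable hmeasX).indicator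
        (hσ (measurableSet_singleton s)))
  have hint : IntervalIntegrable f volume 0 t1 := by
    rw [intervalIntegrable_iff, uIoc_of_le ht1]
    refine Integrable.mono' (integrable_const M) hfm ?_
    exact (ae_restrict_iff' measurableSet_Ioc).2
      (Eventually.of_forall fun τ hτ => hbound τ (Ioc_subset_Icc_self hτ))
  intro k
  have hgc : ContinuousOn (fun τ => coord (X τ) k) (Icc 0 t1) := by
    have : ContinuousOn (fun τ => projL k (X τ)) (Icc 0 t1) :=
      (projL k).continuous.comp_continuousOn hXc
    simpa [projL_apply] using this
  set S : Set ℝ := {τ | τ ∈ Icc (0:ℝ) t1 ∧ 0 ≤ coord (X τ) k} with hSdef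
  have hSeq : S = Icc (0:ℝ) t1 ∩ (fun τ => coord (X τ) k) ⁻¹' (Ici 0) := by
    ext τ; simp [hSdef, Set.mem_preimage]
  have hScl : IsClosed S := by
    rw [hSeq]
    exact hgc.preimage_isClosed_of_isClosed isClosed_Icc isClosed_Ici
  have hSsub : S ⊆ Icc 0 t1 := fun τ hτ => hτ.1
  have hScpt : IsCompact S := isCompact_Icc.of_isClosed_subset hScl hSsub
  have h00 : 0 ≤ coord (X 0) k := by
    fin_cases k
    · simpa [coord] using hX0.1
    · simpa [coord] using hX0.2
  have h0S : (0:ℝ) ∈ S := ⟨⟨le_refl 0, ht1⟩, h00⟩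
  set T := sSup S with hTdef
  have hTS : T ∈ S := hScpt.sSup_mem ⟨0, h0S⟩
  have hT0 : 0 ≤ T := hTS.1.1
  have hTt1 : T ≤ t1 := hTS.1.2
  rcases eq_or_lt_of_le hTt1 with he | hlt
  · rw [← he]; exact hTS.2
  · have hneg : ∀ τ ∈ Ioc T t1, coord (X τ) k < 0 := by
      intro τ hτ
      by_contra hcon
      push_neg at hcon
      have hτS : τ ∈ S := ⟨⟨hT0.trans hτ.1.le, hτ.2⟩, hcon⟩
      exact absurd (le_csSup hScpt.bddAbove hτS) (not_le.2 hτ.1)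
    have hint2 : IntervalIntegrable f volume T t1 := by
      apply hint.mono_set
      rw [uIcc_of_le hTt1, uIcc_of_le ht1]
      exact Icc_subset_Icc hT0 le_rfl
    have hintT : IntervalIntegrable f volume 0 T := by
      apply hint.mono_set
      rw [uIcc_of_le hT0, uIcc_of_le ht1]
      exact Icc_subset_Icc le_rfl hTt1
    have hXdiff : X t1 = X T + ∫ τ in T..t1, f τ := by
      rw [hXeq t1 ht1, hXeq T hT0,
        ← intervalIntegral.integral_interval_sub_left hint hintT]
      abel
    have hcomp : coord (X t1) k = coord (X T) k + ∫ τ in T..t1, projL k (f τ) := by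
      rw [(projL k).intervalIntegral_comp_comm hint2]
      have := congrArg (projL k) hXdiff
      rw [map_add] at this
      simpa [projL_apply] using this
    have hpos : 0 ≤ ∫ τ in T..t1, projL k (f τ) := by
      rw [intervalIntegral.integral_of_le hlt.le]
      apply setIntegral_nonneg measurableSet_Ioc
      intro τ hτ
      rw [hfdef]
      simp only
      rw [projL_Gvec]
      have h1 : 0 < mu β η (σ τ) k (X τ) := mu_pos hη _ _ _
      have h2 : fOut F k (coord (X τ) k) ≤ 0 := fOut_nonpos (hF k).le (hneg τ hτ).le
      linarith
    have hTnn := hTS.2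
    rw [hcomp]
    linarith
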